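/- Let Γ_1, Γ_2 > 0, Γ_3 = −Γ_1Γ_2/(Γ_1 + Γ_2), R = Γ_1² + Γ_1Γ_2 + Γ_2², and θ ∈ ℝ. Define k_1 = (Γ_1Γ_2/(Γ_1 + Γ_2)²)(1 + (√R/Γ_1) e^{−iθ}), k_2 = (Γ_1Γ_2/(Γ_1 + Γ_2)²)(1 − (√R/Γ_2) e^{−iθ}), k_3 = 1. Then: (i) Γ_1 k_1 + Γ_2 k_2 + Γ_3 k_3 = 0; (ii) |k_1 − k_2| = √R/(Γ_1 + Γ_2); (iii) |k_2 − k_3| = (√R/(Γ_1 + Γ_2)²) · √(Γ_1² + R + 2Γ_1√R cos θ); (iv) |k_3 − k_1| = (√R/(Γ_1 + Γ_2)²) · √(Γ_2² + R − 2Γ_2√R cos θ). -/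

import Mathlib

/-- Properties of the one-parameter family of three-vortex collapse configurations:
vanishing linear momentum and the explicit mutual distances. -/
theorem three_vortex_family (Γ₁ Γ₂ : ℝ) (h1 : 0 < Γ₁) (h2 : 0 < Γ₂) (Γ₃ R : ℝ)
    (h3 : Γ₃ = -Γ₁ * Γ₂ / (Γ₁ + Γ₂)) (hR : R = Γ₁ ^ 2 + Γ₁ * Γ₂ + Γ₂ ^ 2) (θ : ℝ)
    (k₁ k₂ k₃ : ℂ)
    (hk1 : k₁ = ((Γ₁ * Γ₂ / (Γ₁ + Γ₂) ^ 2 : ℝ) : ℂ) *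
      (1 + ((Real.sqrt R / Γ₁ : ℝ) : ℂ) * Complex.exp (-(θ : ℂ) * Complex.I)))
    (hk2 : k₂ = ((Γ₁ * Γ₂ / (Γ₁ + Γ₂) ^ 2 : ℝ) : ℂ) *
      (1 - ((Real.sqrt R / Γ₂ : ℝ) : ℂ) * Complex.exp (-(θ : ℂ) * Complex.I)))
    (hk3 : k₃ = 1) :
    (Γ₁ : ℂ) * k₁ + (Γ₂ : ℂ) * k₂ + (Γ₃ : ℂ) * k₃ = 0
    ∧ ‖k₁ - k₂‖ = Real.sqrt R / (Γ₁ + Γ₂)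
    ∧ ‖k₂ - k₃‖ = Real.sqrt R / (Γ₁ + Γ₂) ^ 2 *
        Real.sqrt (Γ₁ ^ 2 + R + 2 * Γ₁ * Real.sqrt R * Real.cos θ)
    ∧ ‖k₃ - k₁‖ = Real.sqrt R / (Γ₁ + Γ₂) ^ 2 *
        Real.sqrt (Γ₂ ^ 2 + R - 2 * Γ₂ * Real.sqrt R * Real.cos θ) := by
  have ha : Γ₁ + Γ₂ ≠ 0 := by positivity
  have h1' : Γ₁ ≠ 0 := h1.ne'
  have h2' : Γ₂ ≠ 0 := h2.ne'
  have haC : ((Γ₁:ℂ) + Γ₂) ≠ 0 := by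
    have := Complex.ofReal_ne_zero.mpr ha; push_cast at this; exact this
  have h1C : (Γ₁:ℂ) ≠ 0 := Complex.ofReal_ne_zero.mpr h1'
  have h2C : (Γ₂:ℂ) ≠ 0 := Complex.ofReal_ne_zero.mpr h2'
  set s := Real.sqrt R with hsdef
  have hRpos : 0 < R := by nlinarith
  have hs0 : 0 ≤ s := Real.sqrt_nonneg R
  have hs2 : s ^ 2 = R := Real.sq_sqrt hRpos.le
  have hs2C : (s:ℂ) ^ 2 = (Γ₁:ℂ) ^ 2 + (Γ₁:ℂ) * Γ₂ + (Γ₂:ℂ) ^ 2 := by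
    have h := congrArg (Complex.ofReal) hs2
    push_cast at h
    rw [h, hR]; push_cast; ring
  set e := Complex.exp (-(θ:ℂ) * Complex.I) with hedef
  have hee : e = ((Real.cos θ : ℝ):ℂ) - ((Real.sin θ : ℝ):ℂ) * Complex.I := by
    rw [hedef, Complex.exp_mul_I, Complex.cos_neg, Complex.sin_neg,
      ← Complex.ofReal_cos, ← Complex.ofReal_sin]; ring
  have here : e.re = Real.cos θ := by
    rw [hee]
    simp only [Complex.sub_re, Complex.ofReal_re, Complex.mul_re, Complex.I_re,
      Complex.I_im, Complex.ofReal_im]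
    ring
  have heim : e.im = -Real.sin θ := by
    rw [hee]
    simp only [Complex.sub_im, Complex.ofReal_im, Complex.mul_im, Complex.I_re,
      Complex.I_im, Complex.ofReal_re]
    ring
  refine ⟨?_, ?_, ?_, ?_⟩
  · rw [hk1, hk2, hk3, h3]
    push_cast
    field_simp
    ring
  · have hd : k₁ - k₂ = ((s / (Γ₁ + Γ₂) : ℝ):ℂ) * e := by
      rw [hk1, hk2]
      push_cast
      field_simp
      ring
    rw [hd, norm_mul, Complex.norm_real, Real.norm_eq_abs, Complex.norm_exp]
    have : (-(θ:ℂ) * Complex.I).re = 0 := by simp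
    rw [this, Real.exp_zero, mul_one, abs_of_nonneg (by positivity)]
  · have hd : k₂ - k₃ = ((s / (Γ₁ + Γ₂) ^ 2 : ℝ):ℂ) * (-(s:ℂ) - (Γ₁:ℂ) * e) := by
      rw [hk2, hk3]
      push_cast
      field_simp
      linear_combination hs2C
    rw [hd, norm_mul, Complex.norm_real, Real.norm_eq_abs, abs_of_nonneg (by positivity)]
    congr 1
    rw [Complex.norm_def, Complex.normSq_apply]
    congr 1
    have hre : (-(s:ℂ) - (Γ₁:ℂ) * e).re = -(s + Γ₁ * Real.cos θ) := by
      simp [here]; ring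
    have him : (-(s:ℂ) - (Γ₁:ℂ) * e).im = Γ₁ * Real.sin θ := by
      simp [heim]
    rw [hre, him]
    linear_combination hs2 + Γ₁ ^ 2 * Real.sin_sq_add_cos_sq θ
  · have hd : k₃ - k₁ = ((s / (Γ₁ + Γ₂) ^ 2 : ℝ):ℂ) * ((s:ℂ) - (Γ₂:ℂ) * e) := by
      rw [hk1, hk3]
      push_cast
      field_simp
      linear_combination (-1:ℂ) * hs2C
    rw [hd, norm_mul, Complex.norm_real, Real.norm_eq_abs, abs_of_nonneg (by positivity)]
    congr 1
    rw [Complex.norm_def, Complex.normSq_apply]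
    congr 1
    have hre : ((s:ℂ) - (Γ₂:ℂ) * e).re = s - Γ₂ * Real.cos θ := by
      simp [here]
    have him : ((s:ℂ) - (Γ₂:ℂ) * e).im = Γ₂ * Real.sin θ := by
      simp [heim]
    rw [hre, him]
    linear_combination hs2 + Γ₂ ^ 2 * Real.sin_sq_add_cos_sq θ
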